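/- arXiv:0911.3786 — 4 statements merged into one kernel-verified Lean document; each statement's English description precedes it below -/
import Mathlib

section
/- In the pushout of a graph monomorphism d : K → D along a graph morphism r : K → R (with D = (K + K̄) +ₑ K̃, H = (R + K̄) +ₑ R̃), for all nodes n_H, p_H of H the set of linking edges R̃(n_H, p_H) is in bijection with the disjoint union, over n_D ∈ r₁⁻¹(n_H) and p_D ∈ r₁⁻¹(p_H), of the sets K̃(n_D, p_D) of linking edges of D. -/
universe u

structure MGraph : Type (u + 1) where
  N : Type u
  E : Type u
  src : E → N
  tgt : E → N

@[ext]
structure GraphHom (X Y : MGraph.{u}) where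
  fN : X.N → Y.N
  fE : X.E → Y.E
  hsrc : ∀ e, Y.src (fE e) = fN (X.src e)
  htgt : ∀ e, Y.tgt (fE e) = fN (X.tgt e)

def GraphHom.id (X : MGraph.{u}) : GraphHom X X :=
  ⟨_root_.id, _root_.id, fun _ => rfl, fun _ => rfl⟩

/-- `g.comp f` is the composite `g ∘ f`. -/
def GraphHom.comp {X Y Z : MGraph.{u}} (g : GraphHom Y Z) (f : GraphHom X Y) :
    GraphHom X Z :=
  ⟨g.fN ∘ f.fN, g.fE ∘ f.fE,
    fun e => by simp [Function.comp, g.hsrc, f.hsrc],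
    fun e => by simp [Function.comp, g.htgt, f.htgt]⟩

section
/- Decomposition data: `D = (K + Kbar) +ₑ Kt`, with `Kt` the linking edges,
   given by their source/target functions into the nodes of `K + Kbar`. -/
variable (K R Kbar : MGraph.{u}) (r : GraphHom K R)
variable (Kt : Type u) (ks kt : Kt → K.N ⊕ Kbar.N)

/-- The graph `D = (K + Kbar) +ₑ Kt`. -/
def Dgr : MGraph.{u} where
  N := K.N ⊕ Kbar.N
  E := K.E ⊕ Kbar.E ⊕ Kt
  src := Sum.elim (Sum.inl ∘ K.src) (Sum.elim (Sum.inr ∘ Kbar.src) ks)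
  tgt := Sum.elim (Sum.inl ∘ K.tgt) (Sum.elim (Sum.inr ∘ Kbar.tgt) kt)

/-- The canonical inclusion (a monomorphism) `d : K → D`. -/
def dmor : GraphHom K (Dgr K Kbar Kt ks kt) :=
  ⟨Sum.inl, Sum.inl, fun _ => rfl, fun _ => rfl⟩

/-- The graph `H = (R + Kbar) +ₑ Rt`, where `Rt ≅ Kt` consists of one edge
`(e, n_K, p_K) : r₁ n_K → r₁ p_K` for each linking edge `e : n_K → p_K` in `Kt`. -/
def Hgr : MGraph.{u} where
  N := R.N ⊕ Kbar.N
  E := R.E ⊕ Kbar.E ⊕ Kt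
  src := Sum.elim (Sum.inl ∘ R.src)
    (Sum.elim (Sum.inr ∘ Kbar.src) (Sum.map r.fN _root_.id ∘ ks))
  tgt := Sum.elim (Sum.inl ∘ R.tgt)
    (Sum.elim (Sum.inr ∘ Kbar.tgt) (Sum.map r.fN _root_.id ∘ kt))

/-- The canonical inclusion `h : R → H`. -/
def hmor : GraphHom R (Hgr K R Kbar r Kt ks kt) :=
  ⟨Sum.inl, Sum.inl, fun _ => rfl, fun _ => rfl⟩

/-- The morphism `r₁ = (r + id) +ₑ r̃ : D → H`. -/
def r1mor : GraphHom (Dgr K Kbar Kt ks kt) (Hgr K R Kbar r Kt ks kt) where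
  fN := Sum.map r.fN _root_.id
  fE := Sum.map r.fE _root_.id
  hsrc := by rintro (e | e | e) <;> simp [Dgr, Hgr, r.hsrc]
  htgt := by rintro (e | e | e) <;> simp [Dgr, Hgr, r.htgt]

end

/-!
STATEMENT 7: in the pushout `H = (R + Kbar) +ₑ Rt` of the mono
`d : K → D = (K + Kbar) +ₑ Kt` along `r : K → R`, for all nodes `n_H, p_H`
of `H`, the set of linking edges `Rt(n_H, p_H)` is in bijection with the
disjoint union, over `n_D ∈ r₁⁻¹(n_H)` and `p_D ∈ r₁⁻¹(p_H)`, of the sets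
`Kt(n_D, p_D)` of linking edges of `D`.
-/
theorem graph_pushout_linking_edges (K R Kbar : MGraph.{u}) (r : GraphHom K R)
    (Kt : Type u) (ks kt : Kt → K.N ⊕ Kbar.N)
    (nH pH : (Hgr K R Kbar r Kt ks kt).N) :
    Nonempty
      ({e : Kt // Sum.map r.fN _root_.id (ks e) = nH ∧
                  Sum.map r.fN _root_.id (kt e) = pH} ≃
       Σ (nD : {n : K.N ⊕ Kbar.N // Sum.map r.fN _root_.id n = nH})
         (pD : {p : K.N ⊕ Kbar.N // Sum.map r.fN _root_.id p = pH}),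
         {e : Kt // ks e = nD.1 ∧ kt e = pD.1}) := by
  refine ⟨{
    toFun := fun e => ⟨⟨ks e.1, e.2.1⟩, ⟨kt e.1, e.2.2⟩, ⟨e.1, rfl, rfl⟩⟩
    invFun := fun x => ⟨x.2.2.1, by rw [x.2.2.2.1, x.1.2], by rw [x.2.2.2.2, x.2.1.2]⟩
    left_inv := fun e => rfl
    right_inv := ?_ }⟩
  intro x
  obtain ⟨⟨n, hn⟩, ⟨p, hp⟩, e, he1, he2⟩ := x
  simp only [] at he1 he2
  subst he1; subst he2; rfl
end

section
/- Let l : K → L be a graph morphism and m : L → G a graph monomorphism, with G = (L + L̄) +ₑ L̃. For any graph K̄, any graph morphism l̄ : K̄ → L̄, any edge-set K̃ on nodes of K + K̄, and any graph morphism l̃ : K̃ → L̃ agreeing with l + l̄ on nodes, the square with D = (K + K̄) +ₑ K̃, d the canonical inclusion, and l₁ = (l + l̄) +ₑ l̃, is a pullback complement of (m, l) in the category of graphs; moreover every pullback complement of (m, l) has this form up to isomorphism. -/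
universe u

section
variable (X Xbar : MGraph.{u}) (Xt : Type u) (xs xt : Xt → X.N ⊕ Xbar.N)

/-- The graph `(X + Xbar) +ₑ Xt` built from decomposition data. -/
def sumGraph : MGraph.{u} where
  N := X.N ⊕ Xbar.N
  E := X.E ⊕ Xbar.E ⊕ Xt
  src := Sum.elim (Sum.inl ∘ X.src) (Sum.elim (Sum.inr ∘ Xbar.src) xs)
  tgt := Sum.elim (Sum.inl ∘ X.tgt) (Sum.elim (Sum.inr ∘ Xbar.tgt) xt)

/-- The canonical inclusion (a monomorphism) `X → (X + Xbar) +ₑ Xt`. -/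
def sumIncl : GraphHom X (sumGraph X Xbar Xt xs xt) :=
  ⟨Sum.inl, Sum.inl, fun _ => rfl, fun _ => rfl⟩

end

section
variable (K L Lbar : MGraph.{u}) (l : GraphHom K L)
variable (Lt : Type u) (ls lt : Lt → L.N ⊕ Lbar.N)
variable (Kbar : MGraph.{u}) (lbar : GraphHom Kbar Lbar)
variable (Kt : Type u) (ks kt : Kt → K.N ⊕ Kbar.N) (ltil : Kt → Lt)
variable (hls : ∀ e, ls (ltil e) = Sum.map l.fN lbar.fN (ks e))
variable (hlt : ∀ e, lt (ltil e) = Sum.map l.fN lbar.fN (kt e))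

/-- The morphism `l₁ = (l + lbar) +ₑ l̃ : (K + Kbar) +ₑ Kt → (L + Lbar) +ₑ Lt`. -/
def pbcMor : GraphHom (sumGraph K Kbar Kt ks kt) (sumGraph L Lbar Lt ls lt) where
  fN := Sum.map l.fN lbar.fN
  fE := Sum.map l.fE (Sum.map lbar.fE ltil)
  hsrc := by rintro (e | e | e) <;> simp [sumGraph, l.hsrc, lbar.hsrc, hls]
  htgt := by rintro (e | e | e) <;> simp [sumGraph, l.htgt, lbar.htgt, hlt]

end

namespace PBCAux

/-- One-node graph. -/
def ptGraph : MGraph.{u} := ⟨PUnit, PEmpty, PEmpty.elim, PEmpty.elim⟩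

/-- One-edge graph. -/
def arrGraph : MGraph.{u} := ⟨ULift Bool, PUnit, fun _ => ⟨false⟩, fun _ => ⟨true⟩⟩

noncomputable section
variable {K L Lbar : MGraph.{u}} {l : GraphHom K L}
variable {Lt : Type u} {ls lt : Lt → L.N ⊕ Lbar.N}
variable {D' : MGraph.{u}} {d' : GraphHom K D'}
variable {l₁' : GraphHom D' (sumGraph L Lbar Lt ls lt)}
variable (hsq : (sumIncl L Lbar Lt ls lt).comp l = l₁'.comp d')
variable (hpb : ∀ (K' : MGraph.{u}) (l' : GraphHom K' L) (d'' : GraphHom K' D'),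
    (sumIncl L Lbar Lt ls lt).comp l' = l₁'.comp d'' →
    ∃! κ : GraphHom K' K, l.comp κ = l' ∧ d'.comp κ = d'')

include hsq in
theorem sqN (k : K.N) : l₁'.fN (d'.fN k) = Sum.inl (l.fN k) :=
  (congrFun (congrArg GraphHom.fN hsq) k).symm

include hsq in
theorem sqE (k : K.E) : l₁'.fE (d'.fE k) = Sum.inl (l.fE k) :=
  (congrFun (congrArg GraphHom.fE hsq) k).symm

include hsq hpb in
theorem euNode (v : D'.N) (u : L.N) (h : l₁'.fN v = Sum.inl u) :
    ∃! k : K.N, l.fN k = u ∧ d'.fN k = v := by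
  obtain ⟨κ, ⟨hl, hd⟩, huniq⟩ := hpb ptGraph
    ⟨fun _ => u, PEmpty.elim, fun e => e.elim, fun e => e.elim⟩
    ⟨fun _ => v, PEmpty.elim, fun e => e.elim, fun e => e.elim⟩
    (by
      refine GraphHom.ext (funext fun _ => h.symm) (funext fun e => e.elim))
  refine ⟨κ.fN ⟨⟩, ⟨congrFun (congrArg GraphHom.fN hl) ⟨⟩,
    congrFun (congrArg GraphHom.fN hd) ⟨⟩⟩, ?_⟩
  rintro k ⟨hk1, hk2⟩
  have := huniq ⟨fun _ => k, PEmpty.elim, fun e => e.elim, fun e => e.elim⟩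
    ⟨GraphHom.ext (funext fun _ => hk1) (funext fun e => e.elim),
     GraphHom.ext (funext fun _ => hk2) (funext fun e => e.elim)⟩
  exact congrFun (congrArg GraphHom.fN this) ⟨⟩

include hsq hpb in
theorem euEdge (e : D'.E) (f : L.E) (h : l₁'.fE e = Sum.inl f) :
    ∃! k : K.E, l.fE k = f ∧ d'.fE k = e := by
  obtain ⟨κ, ⟨hl, hd⟩, huniq⟩ := hpb arrGraph
    ⟨fun b => if b.down then L.tgt f else L.src f, fun _ => f, fun _ => rfl, fun _ => rfl⟩
    ⟨fun b => if b.down then D'.tgt e else D'.src e, fun _ => e, fun _ => rfl, fun _ => rfl⟩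
    (by
      refine GraphHom.ext (funext fun b => ?_) (funext fun _ => h.symm)
      rcases b with ⟨_ | _⟩
      · show Sum.inl (L.src f) = l₁'.fN (D'.src e)
        rw [← l₁'.hsrc, h]; rfl
      · show Sum.inl (L.tgt f) = l₁'.fN (D'.tgt e)
        rw [← l₁'.htgt, h]; rfl)
  refine ⟨κ.fE ⟨⟩, ⟨congrFun (congrArg GraphHom.fE hl) ⟨⟩,
    congrFun (congrArg GraphHom.fE hd) ⟨⟩⟩, ?_⟩
  rintro k ⟨hk1, hk2⟩
  have := huniq
    ⟨fun b => if b.down then K.tgt k else K.src k, fun _ => k, fun _ => rfl, fun _ => rfl⟩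
    ⟨GraphHom.ext (funext fun b => by
        rcases b with ⟨_ | _⟩
        · show l.fN (K.src k) = L.src f
          rw [← hk1, l.hsrc]
        · show l.fN (K.tgt k) = L.tgt f
          rw [← hk1, l.htgt]) (funext fun _ => hk1),
     GraphHom.ext (funext fun b => by
        rcases b with ⟨_ | _⟩
        · show d'.fN (K.src k) = D'.src e
          rw [← hk2, d'.hsrc]
        · show d'.fN (K.tgt k) = D'.tgt e
          rw [← hk2, d'.htgt]) (funext fun _ => hk2)⟩
  exact congrFun (congrArg GraphHom.fE this) ⟨⟩

variable (l₁') in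
/-- Nodes of `D'` lying over `Lbar`. -/
def KbarN : Type u := {v : D'.N // ∃ u, l₁'.fN v = Sum.inr u}

variable (l₁') in
/-- Edges of `D'` lying over `Lbar`. -/
def KbarE : Type u := {e : D'.E // ∃ f, l₁'.fE e = Sum.inr (Sum.inl f)}

variable (l₁') in
theorem KbarE.srcN (e : KbarE l₁') :
    l₁'.fN (D'.src e.1) = Sum.inr (Lbar.src e.2.choose) := by
  have h := l₁'.hsrc e.1
  rw [e.2.choose_spec] at h
  exact h.symm

variable (l₁') in
theorem KbarE.tgtN (e : KbarE l₁') :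
    l₁'.fN (D'.tgt e.1) = Sum.inr (Lbar.tgt e.2.choose) := by
  have h := l₁'.htgt e.1
  rw [e.2.choose_spec] at h
  exact h.symm

variable (l₁') in
/-- The graph `Kbar`. -/
def KbarG : MGraph.{u} :=
  ⟨KbarN l₁', KbarE l₁',
   fun e => ⟨D'.src e.1, _, KbarE.srcN l₁' e⟩,
   fun e => ⟨D'.tgt e.1, _, KbarE.tgtN l₁' e⟩⟩

variable (l₁') in
/-- The morphism `lbar : Kbar → Lbar`. -/
def lbarH : GraphHom (KbarG l₁') Lbar where
  fN v := v.2.choose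
  fE e := e.2.choose
  hsrc e := by
    have h1 := KbarE.srcN l₁' e
    have h2 := ((KbarG l₁').src e).2.choose_spec
    exact Sum.inr_injective (h1.symm.trans h2)
  htgt e := by
    have h1 := KbarE.tgtN l₁' e
    have h2 := ((KbarG l₁').tgt e).2.choose_spec
    exact Sum.inr_injective (h1.symm.trans h2)

/-- Classification of nodes of `D'`. -/
def nodeClass (v : D'.N) : K.N ⊕ KbarN l₁' :=
  match h : l₁'.fN v with
  | .inl u => .inl (euNode hsq hpb v u h).exists.choose
  | .inr u => .inr ⟨v, u, h⟩

theorem nodeClass_spec (v : D'.N) :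
    Sum.map l.fN (lbarH l₁').fN (nodeClass hsq hpb v) = l₁'.fN v := by
  unfold nodeClass
  split
  · next u h =>
      obtain ⟨h1, -⟩ := (euNode hsq hpb v u h).exists.choose_spec
      refine (congrArg Sum.inl h1).trans ?_
      exact h.symm
  · next u h =>
      have hh : l₁'.fN v = Sum.inr ((⟨v, u, h⟩ : KbarN l₁').2.choose) :=
        (⟨v, u, h⟩ : KbarN l₁').2.choose_spec
      show Sum.inr _ = _
      exact hh.symm

theorem nodeClass_inl (v : D'.N) (u : L.N) (h : l₁'.fN v = Sum.inl u) :
    ∃ k, nodeClass hsq hpb v = Sum.inl k ∧ l.fN k = u ∧ d'.fN k = v := by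
  unfold nodeClass
  split
  · next u' h' =>
      obtain ⟨h1, h2⟩ := (euNode hsq hpb v u' h').exists.choose_spec
      exact ⟨_, rfl, (Sum.inl_injective (h'.symm.trans h)) ▸ h1, h2⟩
  · next u' h' => rw [h] at h'; cases h'

theorem nodeClass_inr (v : D'.N) (u : Lbar.N) (h : l₁'.fN v = Sum.inr u) :
    nodeClass hsq hpb v = Sum.inr ⟨v, u, h⟩ := by
  unfold nodeClass
  split
  · next u' h' => rw [h] at h'; cases h'
  · next u' h' => exact congrArg _ (Subtype.ext rfl)

theorem nodeClass_d (k : K.N) : nodeClass hsq hpb (d'.fN k) = Sum.inl k := by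
  obtain ⟨k', hk', hl', hd'⟩ := nodeClass_inl hsq hpb (d'.fN k) (l.fN k) (sqN hsq k)
  rw [hk']
  exact congrArg _ ((euNode hsq hpb (d'.fN k) (l.fN k) (sqN hsq k)).unique
    ⟨hl', hd'⟩ ⟨rfl, rfl⟩)

variable (l₁') in
/-- Extra edges of `D'`. -/
def KtT : Type u := {e : D'.E // ∃ t, l₁'.fE e = Sum.inr (Sum.inr t)}

/-- Source map for `Kt`. -/
def ksF (t : KtT l₁') : K.N ⊕ KbarN l₁' :=
  nodeClass hsq hpb (D'.src t.1)

/-- Target map for `Kt`. -/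
def ktF (t : KtT l₁') : K.N ⊕ KbarN l₁' :=
  nodeClass hsq hpb (D'.tgt t.1)

/-- The map `l̃ : Kt → Lt`. -/
def ltilF (t : KtT l₁') : Lt := t.2.choose

theorem hlsF (t : KtT l₁') :
    ls (ltilF t) = Sum.map l.fN (lbarH l₁').fN (ksF hsq hpb t) := by
  have h := l₁'.hsrc t.1
  rw [t.2.choose_spec] at h
  rw [ksF, nodeClass_spec hsq hpb]
  exact h

theorem hltF (t : KtT l₁') :
    lt (ltilF t) = Sum.map l.fN (lbarH l₁').fN (ktF hsq hpb t) := by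
  have h := l₁'.htgt t.1
  rw [t.2.choose_spec] at h
  rw [ktF, nodeClass_spec hsq hpb]
  exact h

/-- Classification of edges of `D'`. -/
def edgeClass (e : D'.E) :
    K.E ⊕ KbarE l₁' ⊕ KtT l₁' :=
  match h : l₁'.fE e with
  | .inl f => .inl (euEdge hsq hpb e f h).exists.choose
  | .inr (.inl f) => .inr (.inl ⟨e, f, h⟩)
  | .inr (.inr t) => .inr (.inr ⟨e, t, h⟩)

theorem edgeClass_inl (e : D'.E) (f : L.E) (h : l₁'.fE e = Sum.inl f) :
    ∃ k, edgeClass hsq hpb e = Sum.inl k ∧ l.fE k = f ∧ d'.fE k = e := by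
  unfold edgeClass
  split
  · next f' h' =>
      obtain ⟨h1, h2⟩ := (euEdge hsq hpb e f' h').exists.choose_spec
      exact ⟨_, rfl, (Sum.inl_injective (h'.symm.trans h)) ▸ h1, h2⟩
  · next f' h' => rw [h] at h'; cases h'
  · next t' h' => rw [h] at h'; cases h'

theorem edgeClass_d (k : K.E) : edgeClass hsq hpb (d'.fE k) = Sum.inl k := by
  obtain ⟨k', hk', hl', hd'⟩ := edgeClass_inl hsq hpb (d'.fE k) (l.fE k) (sqE hsq k)
  rw [hk']
  exact congrArg _ ((euEdge hsq hpb (d'.fE k) (l.fE k) (sqE hsq k)).unique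
    ⟨hl', hd'⟩ ⟨rfl, rfl⟩)

theorem edgeClass_inrl (e : D'.E) (f : Lbar.E) (h : l₁'.fE e = Sum.inr (Sum.inl f)) :
    edgeClass hsq hpb e = Sum.inr (Sum.inl ⟨e, f, h⟩) := by
  unfold edgeClass
  split
  · next f' h' => rw [h] at h'; cases h'
  · next f' h' => exact congrArg _ (congrArg _ (Subtype.ext rfl))
  · next t' h' => rw [h] at h'; cases h'

theorem edgeClass_inrr (e : D'.E) (t : Lt) (h : l₁'.fE e = Sum.inr (Sum.inr t)) :
    edgeClass hsq hpb e = Sum.inr (Sum.inr ⟨e, t, h⟩) := by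
  unfold edgeClass
  split
  · next f' h' => rw [h] at h'; cases h'
  · next f' h' => rw [h] at h'; cases h'
  · next t' h' => exact congrArg _ (congrArg _ (Subtype.ext rfl))

/-- The target sum graph. -/
abbrev DG : MGraph.{u} :=
  sumGraph K (KbarG l₁') (KtT l₁') (ksF hsq hpb) (ktF hsq hpb)

/-- The isomorphism `φ : D' → (K + Kbar) +ₑ Kt`. -/
def phi : GraphHom D' (DG hsq hpb) where
  fN := nodeClass hsq hpb
  fE := edgeClass hsq hpb
  hsrc e := by
    rcases he : l₁'.fE e with f | f | t
    · obtain ⟨k, hk, hlk, hdk⟩ := edgeClass_inl hsq hpb e f he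
      rw [hk]
      show Sum.inl (K.src k) = nodeClass hsq hpb (D'.src e)
      rw [← hdk, d'.hsrc, nodeClass_d hsq hpb]
    · rw [edgeClass_inrl hsq hpb e f he]
      show Sum.inr ((KbarG l₁').src ⟨e, f, he⟩) = nodeClass hsq hpb (D'.src e)
      rw [nodeClass_inr hsq hpb (D'.src e) _
        (KbarE.srcN l₁' (⟨e, f, he⟩ : KbarE l₁'))]
      rfl
    · rw [edgeClass_inrr hsq hpb e t he]
      rfl
  htgt e := by
    rcases he : l₁'.fE e with f | f | t
    · obtain ⟨k, hk, hlk, hdk⟩ := edgeClass_inl hsq hpb e f he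
      rw [hk]
      show Sum.inl (K.tgt k) = nodeClass hsq hpb (D'.tgt e)
      rw [← hdk, d'.htgt, nodeClass_d hsq hpb]
    · rw [edgeClass_inrl hsq hpb e f he]
      show Sum.inr ((KbarG l₁').tgt ⟨e, f, he⟩) = nodeClass hsq hpb (D'.tgt e)
      rw [nodeClass_inr hsq hpb (D'.tgt e) _
        (KbarE.tgtN l₁' (⟨e, f, he⟩ : KbarE l₁'))]
      rfl
    · rw [edgeClass_inrr hsq hpb e t he]
      rfl

/-- The inverse morphism `ψ`. -/
def psi : GraphHom (DG hsq hpb) D' where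
  fN := Sum.elim d'.fN Subtype.val
  fE := Sum.elim d'.fE (Sum.elim Subtype.val Subtype.val)
  hsrc e := by
    rcases e with k | f | t
    · exact d'.hsrc k
    · rfl
    · show D'.src t.1 = Sum.elim d'.fN Subtype.val (ksF hsq hpb t)
      rw [ksF]
      rcases hn : l₁'.fN (D'.src t.1) with u | u
      · obtain ⟨k, hk, _, hdk⟩ := nodeClass_inl hsq hpb _ u hn
        rw [hk]; exact hdk.symm
      · rw [nodeClass_inr hsq hpb _ u hn]
        exact rfl
  htgt e := by
    rcases e with k | f | t
    · exact d'.htgt k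
    · rfl
    · show D'.tgt t.1 = Sum.elim d'.fN Subtype.val (ktF hsq hpb t)
      rw [ktF]
      rcases hn : l₁'.fN (D'.tgt t.1) with u | u
      · obtain ⟨k, hk, _, hdk⟩ := nodeClass_inl hsq hpb _ u hn
        rw [hk]; exact hdk.symm
      · rw [nodeClass_inr hsq hpb _ u hn]
        exact rfl

theorem psi_phi : (psi hsq hpb).comp (phi hsq hpb) = GraphHom.id D' := by
  refine GraphHom.ext (funext fun v => ?_) (funext fun e => ?_)
  · show Sum.elim d'.fN Subtype.val (nodeClass hsq hpb v) = v
    rcases hn : l₁'.fN v with u | u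
    · obtain ⟨k, hk, _, hdk⟩ := nodeClass_inl hsq hpb v u hn
      rw [hk]; exact hdk
    · rw [nodeClass_inr hsq hpb v u hn]
      exact rfl
  · show Sum.elim d'.fE _ (edgeClass hsq hpb e) = e
    rcases he : l₁'.fE e with f | f | t
    · obtain ⟨k, hk, _, hdk⟩ := edgeClass_inl hsq hpb e f he
      rw [hk]; exact hdk
    · rw [edgeClass_inrl hsq hpb e f he]
      exact rfl
    · rw [edgeClass_inrr hsq hpb e t he]
      exact rfl

theorem phi_psi : (phi hsq hpb).comp (psi hsq hpb) = GraphHom.id (DG hsq hpb) := by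
  refine GraphHom.ext (funext fun v => ?_) (funext fun e => ?_)
  · rcases v with k | v
    · exact nodeClass_d hsq hpb k
    · exact nodeClass_inr hsq hpb v.1 _ v.2.choose_spec |>.trans
        (congrArg _ (Subtype.ext rfl))
  · rcases e with k | f | t
    · exact edgeClass_d hsq hpb k
    · exact edgeClass_inrl hsq hpb f.1 _ f.2.choose_spec |>.trans
        (congrArg _ (congrArg _ (Subtype.ext rfl)))
    · exact edgeClass_inrr hsq hpb t.1 _ t.2.choose_spec |>.trans
        (congrArg _ (congrArg _ (Subtype.ext rfl)))

theorem phi_d : (phi hsq hpb).comp d' =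
    sumIncl K (KbarG l₁') (KtT l₁') (ksF hsq hpb) (ktF hsq hpb) := by
  refine GraphHom.ext (funext fun k => ?_) (funext fun k => ?_)
  · exact nodeClass_d hsq hpb k
  · exact edgeClass_d hsq hpb k

theorem pbc_phi :
    (pbcMor K L Lbar l Lt ls lt (KbarG l₁') (lbarH l₁') (KtT l₁')
      (ksF hsq hpb) (ktF hsq hpb) (ltilF) (hlsF hsq hpb) (hltF hsq hpb)).comp
        (phi hsq hpb) = l₁' := by
  refine GraphHom.ext (funext fun v => ?_) (funext fun e => ?_)
  · exact nodeClass_spec hsq hpb v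
  · show Sum.map l.fE (Sum.map (lbarH l₁').fE ltilF) (edgeClass hsq hpb e) = l₁'.fE e
    rcases he : l₁'.fE e with f | f | t
    · obtain ⟨k, hk, hlk, _⟩ := edgeClass_inl hsq hpb e f he
      rw [hk]; exact congrArg Sum.inl hlk
    · rw [edgeClass_inrl hsq hpb e f he]
      have hc : l₁'.fE e = Sum.inr (Sum.inl ((⟨e, f, he⟩ : KbarE l₁').2.choose)) :=
        (⟨e, f, he⟩ : KbarE l₁').2.choose_spec
      have hfc : f = (⟨e, f, he⟩ : KbarE l₁').2.choose :=
        Sum.inl_injective (Sum.inr_injective (he.symm.trans hc))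
      exact congrArg Sum.inr (congrArg Sum.inl hfc.symm)
    · rw [edgeClass_inrr hsq hpb e t he]
      have hc : l₁'.fE e = Sum.inr (Sum.inr ((⟨e, t, he⟩ : KtT l₁').2.choose)) :=
        (⟨e, t, he⟩ : KtT l₁').2.choose_spec
      have htc : t = (⟨e, t, he⟩ : KtT l₁').2.choose :=
        Sum.inr_injective (Sum.inr_injective (he.symm.trans hc))
      exact congrArg Sum.inr (congrArg Sum.inr htc.symm)

end
end PBCAux

/-!
STATEMENT 8: pullback complements in the category of graphs.  Let
`l : K → L` be a graph morphism and `m : L → G` a graph monomorphism,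
presented canonically via `G = (L + Lbar) +ₑ Lt`.  (1) For any graph `Kbar`,
any morphism `lbar : Kbar → Lbar`, any edge-set `Kt` on the nodes of
`K + Kbar` and any map `l̃ : Kt → Lt` agreeing with `l + lbar` on endpoints,
the square with `D = (K + Kbar) +ₑ Kt`, `d` the canonical inclusion and
`l₁ = (l + lbar) +ₑ l̃` is a pullback complement of `(m, l)`.
(2) Conversely, every pullback complement of `(m, l)` has this form up to
isomorphism.
-/
theorem graph_pullback_complements (K L Lbar : MGraph.{u}) (l : GraphHom K L)
    (Lt : Type u) (ls lt : Lt → L.N ⊕ Lbar.N) :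
    -- (1) each square of the given form is a pullback complement
    (∀ (Kbar : MGraph.{u}) (lbar : GraphHom Kbar Lbar)
       (Kt : Type u) (ks kt : Kt → K.N ⊕ Kbar.N) (ltil : Kt → Lt)
       (hls : ∀ e, ls (ltil e) = Sum.map l.fN lbar.fN (ks e))
       (hlt : ∀ e, lt (ltil e) = Sum.map l.fN lbar.fN (kt e)),
       ((sumIncl L Lbar Lt ls lt).comp l =
          (pbcMor K L Lbar l Lt ls lt Kbar lbar Kt ks kt ltil hls hlt).comp
            (sumIncl K Kbar Kt ks kt)) ∧
       ∀ (K' : MGraph.{u}) (l' : GraphHom K' L)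
         (d' : GraphHom K' (sumGraph K Kbar Kt ks kt)),
         (sumIncl L Lbar Lt ls lt).comp l' =
           (pbcMor K L Lbar l Lt ls lt Kbar lbar Kt ks kt ltil hls hlt).comp d' →
         ∃! κ : GraphHom K' K,
           l.comp κ = l' ∧ (sumIncl K Kbar Kt ks kt).comp κ = d') ∧
    -- (2) every pullback complement of (m, l) has this form up to isomorphism
    (∀ (D' : MGraph.{u}) (d' : GraphHom K D')
       (l₁' : GraphHom D' (sumGraph L Lbar Lt ls lt)),
       ((sumIncl L Lbar Lt ls lt).comp l = l₁'.comp d') →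
       (∀ (K' : MGraph.{u}) (l' : GraphHom K' L) (d'' : GraphHom K' D'),
         (sumIncl L Lbar Lt ls lt).comp l' = l₁'.comp d'' →
         ∃! κ : GraphHom K' K, l.comp κ = l' ∧ d'.comp κ = d'') →
       ∃ (Kbar : MGraph.{u}) (lbar : GraphHom Kbar Lbar)
         (Kt : Type u) (ks kt : Kt → K.N ⊕ Kbar.N) (ltil : Kt → Lt)
         (hls : ∀ e, ls (ltil e) = Sum.map l.fN lbar.fN (ks e))
         (hlt : ∀ e, lt (ltil e) = Sum.map l.fN lbar.fN (kt e))
         (φ : GraphHom D' (sumGraph K Kbar Kt ks kt))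
         (ψ : GraphHom (sumGraph K Kbar Kt ks kt) D'),
         ψ.comp φ = GraphHom.id D' ∧
         φ.comp ψ = GraphHom.id (sumGraph K Kbar Kt ks kt) ∧
         φ.comp d' = sumIncl K Kbar Kt ks kt ∧
         (pbcMor K L Lbar l Lt ls lt Kbar lbar Kt ks kt ltil hls hlt).comp φ
           = l₁') := by

  constructor
  · intro Kbar lbar Kt ks kt ltil hls hlt
    refine ⟨GraphHom.ext (funext fun _ => rfl) (funext fun _ => rfl), ?_⟩
    intro K' l' d'' hcomm
    have hN : ∀ x, ∃ k, d''.fN x = Sum.inl k ∧ l.fN k = l'.fN x := by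
      intro x
      have h : Sum.inl (l'.fN x) = Sum.map l.fN lbar.fN (d''.fN x) :=
        congrFun (congrArg GraphHom.fN hcomm) x
      rcases hx : d''.fN x with k | k
      · rw [hx] at h
        exact ⟨k, rfl, (Sum.inl_injective h).symm⟩
      · rw [hx] at h
        simp at h
    have hE : ∀ e, ∃ k, d''.fE e = Sum.inl k ∧ l.fE k = l'.fE e := by
      intro e
      have h : Sum.inl (l'.fE e) = Sum.map l.fE (Sum.map lbar.fE ltil) (d''.fE e) :=
        congrFun (congrArg GraphHom.fE hcomm) e
      rcases hx : d''.fE e with k | k | k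
      · rw [hx] at h
        exact ⟨k, rfl, (Sum.inl_injective h).symm⟩
      · rw [hx] at h
        simp at h
      · rw [hx] at h
        simp at h
    refine ⟨⟨fun x => (hN x).choose, fun e => (hE e).choose, ?_, ?_⟩, ⟨?_, ?_⟩, ?_⟩
    · intro e
      apply Sum.inl_injective
      have h := d''.hsrc e
      rw [(hE e).choose_spec.1, (hN (K'.src e)).choose_spec.1] at h
      exact h
    · intro e
      apply Sum.inl_injective
      have h := d''.htgt e
      rw [(hE e).choose_spec.1, (hN (K'.tgt e)).choose_spec.1] at h
      exact h
    · exact GraphHom.ext (funext fun x => (hN x).choose_spec.2)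
        (funext fun e => (hE e).choose_spec.2)
    · exact GraphHom.ext (funext fun x => ((hN x).choose_spec.1).symm)
        (funext fun e => ((hE e).choose_spec.1).symm)
    · rintro κ' ⟨h1, h2⟩
      refine GraphHom.ext (funext fun x => ?_) (funext fun e => ?_)
      · apply Sum.inl_injective
        exact (congrFun (congrArg GraphHom.fN h2) x).trans (hN x).choose_spec.1
      · apply Sum.inl_injective
        exact (congrFun (congrArg GraphHom.fE h2) e).trans (hE e).choose_spec.1
  · intro D' d' l₁' hsq hpb
    exact ⟨PBCAux.KbarG l₁', PBCAux.lbarH l₁', PBCAux.KtT l₁',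
      PBCAux.ksF hsq hpb, PBCAux.ktF hsq hpb, PBCAux.ltilF,
      PBCAux.hlsF hsq hpb, PBCAux.hltF hsq hpb,
      PBCAux.phi hsq hpb, PBCAux.psi hsq hpb,
      PBCAux.psi_phi hsq hpb, PBCAux.phi_psi hsq hpb,
      PBCAux.phi_d hsq hpb, PBCAux.pbc_phi hsq hpb⟩
end

section
/- Let l : K → L be a graph morphism and m : L → G a graph monomorphism, with G = (L + L̄) +ₑ L̃. The final pullback complement (pushback) of (m, l) exists and is given by D = (K + L̄) +ₑ K̃, where K̃ has one edge (e, n, p) : n → p for every pair of nodes n, p of D and every linking edge e : l₁(n) → l₁(p) in L̃, with d the canonical inclusion and l₁ = (l + id_{L̄}) +ₑ l̃, l̃(e, n, p) = e. -/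
universe u

section
variable (K L Lbar : MGraph.{u}) (l : GraphHom K L)
variable (Lt : Type u) (ls lt : Lt → L.N ⊕ Lbar.N)

/-- The linking edges of the pushback `D = (K + Lbar) +ₑ Kt`: one edge
`(e, n, p) : n → p` for every pair of nodes `n, p` of `D` and every linking
edge `e : l₁ n → l₁ p` in `Lt`. -/
def pbKt : Type u :=
  {x : ((K.N ⊕ Lbar.N) × (K.N ⊕ Lbar.N)) × Lt //
    ls x.2 = Sum.map l.fN _root_.id x.1.1 ∧
    lt x.2 = Sum.map l.fN _root_.id x.1.2}

/-- The pushback (final pullback complement) graph `D = (K + Lbar) +ₑ Kt`. -/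
def pbD : MGraph.{u} where
  N := K.N ⊕ Lbar.N
  E := K.E ⊕ Lbar.E ⊕ pbKt K L Lbar l Lt ls lt
  src := Sum.elim (Sum.inl ∘ K.src) (Sum.elim (Sum.inr ∘ Lbar.src) (fun x => x.1.1.1))
  tgt := Sum.elim (Sum.inl ∘ K.tgt) (Sum.elim (Sum.inr ∘ Lbar.tgt) (fun x => x.1.1.2))

/-- The canonical inclusion `d : K → D`. -/
def pbd : GraphHom K (pbD K L Lbar l Lt ls lt) :=
  ⟨Sum.inl, Sum.inl, fun _ => rfl, fun _ => rfl⟩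

/-- The morphism `l₁ = (l + id) +ₑ l̃ : D → G`, `l̃ (e, n, p) = e`. -/
def pbl1 : GraphHom (pbD K L Lbar l Lt ls lt) (sumGraph L Lbar Lt ls lt) where
  fN := Sum.map l.fN _root_.id
  fE := Sum.map l.fE (Sum.map _root_.id (fun x => x.1.2))
  hsrc := by
    rintro (e | e | e) <;>
      simp [pbD, sumGraph, l.hsrc]
    exact e.2.1
  htgt := by
    rintro (e | e | e) <;>
      simp [pbD, sumGraph, l.htgt]
    exact e.2.2

end


/-! Auxiliary material -/

theorem Sum.inl_getLeft' {α β : Type*} (x : α ⊕ β) (h : x.isLeft) :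
    Sum.inl (x.getLeft h) = x := by cases x <;> simp_all

def ptGraph : MGraph.{u} := ⟨PUnit, PEmpty, PEmpty.elim, PEmpty.elim⟩

def ptHom (X : MGraph.{u}) (x : X.N) : GraphHom ptGraph X :=
  ⟨fun _ => x, PEmpty.elim, fun e => e.elim, fun e => e.elim⟩

def arrGraph : MGraph.{u} := ⟨ULift Bool, PUnit, fun _ => ⟨false⟩, fun _ => ⟨true⟩⟩

def arrHom (X : MGraph.{u}) (e : X.E) : GraphHom arrGraph X :=
  ⟨fun b => if b.down then X.tgt e else X.src e, fun _ => e, fun _ => rfl, fun _ => rfl⟩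

theorem ptHom_eq {X : MGraph.{u}} (κ : GraphHom ptGraph X) : κ = ptHom X (κ.fN ⟨⟩) := by
  ext x
  · cases x; rfl
  · exact x.elim

theorem arrHom_eq {X : MGraph.{u}} (κ : GraphHom arrGraph X) : κ = arrHom X (κ.fE ⟨⟩) := by
  ext x
  · obtain ⟨(_|_)⟩ := x
    · exact (κ.hsrc ⟨⟩).symm
    · exact (κ.htgt ⟨⟩).symm
  · rfl


theorem pbE_ext {K L Lbar : MGraph.{u}} {l : GraphHom K L} {Lt : Type u}
    {ls lt : Lt → L.N ⊕ Lbar.N}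
    (y y' : (pbD K L Lbar l Lt ls lt).E) (w : Lbar.E ⊕ Lt)
    (hy : (pbl1 K L Lbar l Lt ls lt).fE y = Sum.inr w)
    (hy' : (pbl1 K L Lbar l Lt ls lt).fE y' = Sum.inr w)
    (hs : (pbD K L Lbar l Lt ls lt).src y = (pbD K L Lbar l Lt ls lt).src y')
    (ht : (pbD K L Lbar l Lt ls lt).tgt y = (pbD K L Lbar l Lt ls lt).tgt y') :
    y = y' := by
  rcases y with k | b | x
  · exact absurd hy (by simp [pbl1])
  · rcases y' with k' | b' | x'
    · exact absurd hy' (by simp [pbl1])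
    · have h1 : (Sum.inl b : Lbar.E ⊕ Lt) = w := Sum.inr_injective hy
      have h2 : (Sum.inl b' : Lbar.E ⊕ Lt) = w := Sum.inr_injective hy'
      rw [Sum.inl_injective (h1.trans h2.symm)]
    · have h1 : (Sum.inl b : Lbar.E ⊕ Lt) = w := Sum.inr_injective hy
      have h2 : (Sum.inr x'.1.2 : Lbar.E ⊕ Lt) = w := Sum.inr_injective hy'
      exact absurd (h1.trans h2.symm) (by simp)
  · rcases y' with k' | b' | x'
    · exact absurd hy' (by simp [pbl1])
    · have h1 : (Sum.inr x.1.2 : Lbar.E ⊕ Lt) = w := Sum.inr_injective hy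
      have h2 : (Sum.inl b' : Lbar.E ⊕ Lt) = w := Sum.inr_injective hy'
      exact absurd (h2.trans h1.symm) (by simp)
    · have h1 : (Sum.inr x.1.2 : Lbar.E ⊕ Lt) = w := Sum.inr_injective hy
      have h2 : (Sum.inr x'.1.2 : Lbar.E ⊕ Lt) = w := Sum.inr_injective hy'
      have hts : x.1.2 = x'.1.2 := Sum.inr_injective (h1.trans h2.symm)
      have hns : x.1.1.1 = x'.1.1.1 := hs
      have hps : x.1.1.2 = x'.1.1.2 := ht
      congr 1
      congr 1
      apply Subtype.ext
      obtain ⟨⟨⟨n, p⟩, t⟩, hx⟩ := x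
      obtain ⟨⟨⟨n', p'⟩, t'⟩, hx'⟩ := x'
      simp_all

/-!
STATEMENT 9: the final pullback complement (pushback) of a graph morphism
`l : K → L` along a graph monomorphism `m : L → G`, presented canonically
via `G = (L + Lbar) +ₑ Lt`, exists and is given by `D = (K + Lbar) +ₑ Kt`,
where `Kt` has one edge `(e, n, p) : n → p` for all nodes `n, p` of `D` and
every linking edge `e : l₁ n → l₁ p` in `Lt`, with `d` the canonical
inclusion and `l₁ = (l + id) +ₑ l̃`, `l̃ (e, n, p) = e`.
-/
theorem graph_final_pullback_complement (K L Lbar : MGraph.{u})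
    (l : GraphHom K L) (Lt : Type u) (ls lt : Lt → L.N ⊕ Lbar.N) :
    -- the square is a pullback complement of (m, l):
    (((sumIncl L Lbar Lt ls lt).comp l =
        (pbl1 K L Lbar l Lt ls lt).comp (pbd K L Lbar l Lt ls lt)) ∧
      ∀ (K' : MGraph.{u}) (l' : GraphHom K' L)
        (d'' : GraphHom K' (pbD K L Lbar l Lt ls lt)),
        (sumIncl L Lbar Lt ls lt).comp l' = (pbl1 K L Lbar l Lt ls lt).comp d'' →
        ∃! κ : GraphHom K' K,
          l.comp κ = l' ∧ (pbd K L Lbar l Lt ls lt).comp κ = d'') ∧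
    -- and it is final among all pullback complements of (m, l):
    ∀ (D' : MGraph.{u}) (d' : GraphHom K D')
      (l₁' : GraphHom D' (sumGraph L Lbar Lt ls lt)),
      ((sumIncl L Lbar Lt ls lt).comp l = l₁'.comp d') →
      (∀ (K' : MGraph.{u}) (l' : GraphHom K' L) (d'' : GraphHom K' D'),
        (sumIncl L Lbar Lt ls lt).comp l' = l₁'.comp d'' →
        ∃! κ : GraphHom K' K, l.comp κ = l' ∧ d'.comp κ = d'') →
      ∃! δ : GraphHom D' (pbD K L Lbar l Lt ls lt),
        δ.comp d' = pbd K L Lbar l Lt ls lt ∧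
        (pbl1 K L Lbar l Lt ls lt).comp δ = l₁' := by
  classical
  refine ⟨⟨?_, ?_⟩, ?_⟩
  · -- the square commutes
    rfl
  · -- pullback complement property
    intro K' l' d'' hc
    have hcN : ∀ x, Sum.inl (l'.fN x) = Sum.map l.fN _root_.id (d''.fN x) :=
      fun x => congrFun (congrArg GraphHom.fN hc) x
    have hcE : ∀ e, (Sum.inl (l'.fE e) : L.E ⊕ Lbar.E ⊕ Lt) =
        Sum.map l.fE (Sum.map _root_.id (fun x => x.1.2)) (d''.fE e) :=
      fun e => congrFun (congrArg GraphHom.fE hc) e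
    have hNl : ∀ x, (d''.fN x).isLeft := by
      intro x
      have h := hcN x
      cases hd : d''.fN x with
      | inl a => simp
      | inr b => rw [hd] at h; exact absurd h (by simp)
    have hEl : ∀ e, (d''.fE e).isLeft := by
      intro e
      have h := hcE e
      cases hd : d''.fE e with
      | inl a => simp
      | inr b => rw [hd] at h; exact absurd h (by simp)
    refine ⟨⟨fun x => (d''.fN x).getLeft (hNl x), fun e => (d''.fE e).getLeft (hEl e),
        ?_, ?_⟩, ⟨?_, ?_⟩, ?_⟩
    · intro e
      apply Sum.inl_injective
      have h1 := d''.hsrc e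
      rw [← Sum.inl_getLeft' (d''.fE e) (hEl e),
        ← Sum.inl_getLeft' (d''.fN (K'.src e)) (hNl _)] at h1
      exact h1
    · intro e
      apply Sum.inl_injective
      have h1 := d''.htgt e
      rw [← Sum.inl_getLeft' (d''.fE e) (hEl e),
        ← Sum.inl_getLeft' (d''.fN (K'.tgt e)) (hNl _)] at h1
      exact h1
    · ext x
      · apply Sum.inl_injective
        have h := (hcN x).symm
        rw [← Sum.inl_getLeft' (d''.fN x) (hNl x)] at h
        exact h
      · apply Sum.inl_injective
        have h := (hcE x).symm
        rw [← Sum.inl_getLeft' (d''.fE x) (hEl x)] at h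
        exact h
    · ext x
      · exact Sum.inl_getLeft' (d''.fN x) (hNl x)
      · exact Sum.inl_getLeft' (d''.fE x) (hEl x)
    · rintro κ' ⟨hk1, hk2⟩
      ext x
      · apply Sum.inl_injective
        have h := congrFun (congrArg GraphHom.fN hk2) x
        refine Eq.trans ?_ (Sum.inl_getLeft' (d''.fN x) (hNl x)).symm
        exact h
      · apply Sum.inl_injective
        have h := congrFun (congrArg GraphHom.fE hk2) x
        refine Eq.trans ?_ (Sum.inl_getLeft' (d''.fE x) (hEl x)).symm
        exact h
  · -- finality
    intro D' d' l₁' hsq hpb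
    have hsqN : ∀ k, Sum.inl (l.fN k) = l₁'.fN (d'.fN k) :=
      fun k => congrFun (congrArg GraphHom.fN hsq) k
    have hsqE : ∀ e, (Sum.inl (l.fE e) : L.E ⊕ Lbar.E ⊕ Lt) = l₁'.fE (d'.fE e) :=
      fun e => congrFun (congrArg GraphHom.fE hsq) e
    have nodeExists : ∀ (x' : D'.N) (a : L.N), l₁'.fN x' = Sum.inl a →
        ∃! k : K.N, l.fN k = a ∧ d'.fN k = x' := by
      intro x' a h
      obtain ⟨κ, ⟨hκ1, hκ2⟩, hκu⟩ := hpb ptGraph (ptHom L a) (ptHom D' x')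
        (by ext u
            · exact h.symm
            · exact u.elim)
      refine ⟨κ.fN ⟨⟩, ⟨congrFun (congrArg GraphHom.fN hκ1) ⟨⟩,
        congrFun (congrArg GraphHom.fN hκ2) ⟨⟩⟩, ?_⟩
      rintro k ⟨hk1, hk2⟩
      have hek : ptHom K k = κ := by
        apply hκu
        constructor
        · ext u
          · exact hk1
          · exact u.elim
        · ext u
          · exact hk2
          · exact u.elim
      exact congrFun (congrArg GraphHom.fN hek) ⟨⟩
    have edgeExists : ∀ (e' : D'.E) (a : L.E), l₁'.fE e' = Sum.inl a →
        ∃! k : K.E, l.fE k = a ∧ d'.fE k = e' := by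
      intro e' a h
      obtain ⟨κ, ⟨hκ1, hκ2⟩, hκu⟩ := hpb arrGraph (arrHom L a) (arrHom D' e')
        (by ext u
            · obtain ⟨(_ | _)⟩ := u
              · have h1 := l₁'.hsrc e'
                rw [h] at h1
                exact h1
              · have h1 := l₁'.htgt e'
                rw [h] at h1
                exact h1
            · exact h.symm)
      refine ⟨κ.fE ⟨⟩, ⟨congrFun (congrArg GraphHom.fE hκ1) ⟨⟩,
        congrFun (congrArg GraphHom.fE hκ2) ⟨⟩⟩, ?_⟩
      rintro k ⟨hk1, hk2⟩
      have hek : arrHom K k = κ := by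
        apply hκu
        constructor
        · ext u
          · obtain ⟨(_ | _)⟩ := u
            · rw [← hk1]; exact (l.hsrc k).symm
            · rw [← hk1]; exact (l.htgt k).symm
          · exact hk1
        · ext u
          · obtain ⟨(_ | _)⟩ := u
            · rw [← hk2]; exact (d'.hsrc k).symm
            · rw [← hk2]; exact (d'.htgt k).symm
          · exact hk2
      exact congrFun (congrArg GraphHom.fE hek) ⟨⟩
    have hδN : ∀ x' : D'.N, ∃ y : K.N ⊕ Lbar.N,
        Sum.map l.fN _root_.id y = l₁'.fN x' ∧ ∀ k, y = Sum.inl k → d'.fN k = x' := by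
      intro x'
      cases h : l₁'.fN x' with
      | inl a =>
        obtain ⟨k, ⟨hk1, hk2⟩, -⟩ := nodeExists x' a h
        refine ⟨Sum.inl k, by simp [hk1], ?_⟩
        rintro k' hk'
        obtain rfl := Sum.inl_injective hk'
        exact hk2
      | inr b =>
        exact ⟨Sum.inr b, by simp, by simp⟩
    choose δN hδN1 hδN2 using hδN
    have hδN_inl : ∀ (x' : D'.N) (a : L.N), l₁'.fN x' = Sum.inl a →
        ∀ k : K.N, l.fN k = a → d'.fN k = x' → δN x' = Sum.inl k := by
      intro x' a h k hk1 hk2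
      obtain ⟨k₀, -, hu⟩ := nodeExists x' a h
      cases hy : δN x' with
      | inl k₁ =>
        have h1 := hδN1 x'
        rw [hy, h] at h1
        have hlk₁ : l.fN k₁ = a := by simpa using h1
        rw [hu k₁ ⟨hlk₁, hδN2 x' k₁ hy⟩, hu k ⟨hk1, hk2⟩]
      | inr b =>
        have h1 := hδN1 x'
        rw [hy, h] at h1
        simp at h1
    have hδN_inr : ∀ (x' : D'.N) (b : Lbar.N), l₁'.fN x' = Sum.inr b →
        δN x' = Sum.inr b := by
      intro x' b h
      have h1 := hδN1 x'
      rw [h] at h1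
      cases hy : δN x' with
      | inl k => rw [hy] at h1; exact absurd h1 (by simp)
      | inr b' =>
        rw [hy] at h1
        simp only [Sum.map_inr, id_eq, Sum.inr.injEq] at h1
        rw [h1]
    have hδE : ∀ e' : D'.E, ∃ y : (pbD K L Lbar l Lt ls lt).E,
        (pbl1 K L Lbar l Lt ls lt).fE y = l₁'.fE e' ∧
        (pbD K L Lbar l Lt ls lt).src y = δN (D'.src e') ∧
        (pbD K L Lbar l Lt ls lt).tgt y = δN (D'.tgt e') ∧
        ∀ k, y = Sum.inl k → d'.fE k = e' := by
      intro e'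
      cases h : l₁'.fE e' with
      | inl a =>
        obtain ⟨k, ⟨hk1, hk2⟩, -⟩ := edgeExists e' a h
        have hs : l₁'.fN (D'.src e') = Sum.inl (L.src a) := by
          rw [← l₁'.hsrc e', h]; rfl
        have ht : l₁'.fN (D'.tgt e') = Sum.inl (L.tgt a) := by
          rw [← l₁'.htgt e', h]; rfl
        refine ⟨Sum.inl k, by simp [pbl1, hk1]; rfl, ?_, ?_, ?_⟩
        · have := hδN_inl (D'.src e') (L.src a) hs (K.src k)
            (by rw [← hk1]; exact (l.hsrc k).symm)
            (by rw [← hk2]; exact (d'.hsrc k).symm)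
          exact this.symm
        · have := hδN_inl (D'.tgt e') (L.tgt a) ht (K.tgt k)
            (by rw [← hk1]; exact (l.htgt k).symm)
            (by rw [← hk2]; exact (d'.htgt k).symm)
          exact this.symm
        · rintro k' hk'
          obtain rfl := Sum.inl_injective hk'
          exact hk2
      | inr w =>
        cases w with
        | inl b =>
          have hs : l₁'.fN (D'.src e') = Sum.inr (Lbar.src b) := by
            rw [← l₁'.hsrc e', h]; rfl
          have ht : l₁'.fN (D'.tgt e') = Sum.inr (Lbar.tgt b) := by
            rw [← l₁'.htgt e', h]; rfl
          refine ⟨Sum.inr (Sum.inl b), rfl, ?_, ?_, ?_⟩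
          · exact (hδN_inr _ _ hs).symm
          · exact (hδN_inr _ _ ht).symm
          · rintro k hk
            simp at hk
        | inr t =>
          have hs : l₁'.fN (D'.src e') = ls t := by
            rw [← l₁'.hsrc e', h]; rfl
          have ht : l₁'.fN (D'.tgt e') = lt t := by
            rw [← l₁'.htgt e', h]; rfl
          refine ⟨Sum.inr (Sum.inr ⟨((δN (D'.src e'), δN (D'.tgt e')), t),
            ⟨?_, ?_⟩⟩), ?_, ?_, ?_, ?_⟩
          · rw [hδN1, hs]
          · rw [hδN1, ht]
          · rfl
          · rfl
          · rfl
          · rintro k hk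
            simp at hk
    choose δE hδE1 hδE2 hδE3 hδE4 using hδE
    have hδE_inl : ∀ (e' : D'.E) (a : L.E), l₁'.fE e' = Sum.inl a →
        ∀ k : K.E, l.fE k = a → d'.fE k = e' → δE e' = Sum.inl k := by
      intro e' a h k hk1 hk2
      obtain ⟨k₀, -, hu⟩ := edgeExists e' a h
      cases hy : δE e' with
      | inl k₁ =>
        have h1 := hδE1 e'
        rw [hy, h] at h1
        have hlk₁ : l.fE k₁ = a := Sum.inl_injective
          (show (Sum.inl (l.fE k₁) : L.E ⊕ Lbar.E ⊕ Lt) = Sum.inl a from h1)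
        rw [hu k₁ ⟨hlk₁, hδE4 e' k₁ hy⟩, hu k ⟨hk1, hk2⟩]
      | inr w =>
        have h1 := hδE1 e'
        rw [hy, h] at h1
        cases w <;> simp [pbl1] at h1
    refine ⟨⟨δN, δE, fun e => hδE2 e, fun e => hδE3 e⟩, ⟨?_, ?_⟩, ?_⟩
    · ext k
      · exact hδN_inl _ (l.fN k) (hsqN k).symm k rfl rfl
      · exact hδE_inl _ (l.fE k) (hsqE k).symm k rfl rfl
    · ext x
      · exact hδN1 x
      · exact hδE1 x
    · rintro δ' ⟨h1, h2⟩
      have h2N : ∀ x', Sum.map l.fN _root_.id (δ'.fN x') = l₁'.fN x' :=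
        fun x' => congrFun (congrArg GraphHom.fN h2) x'
      have h2E : ∀ e', (pbl1 K L Lbar l Lt ls lt).fE (δ'.fE e') = l₁'.fE e' :=
        fun e' => congrFun (congrArg GraphHom.fE h2) e'
      have h1N : ∀ k, δ'.fN (d'.fN k) = Sum.inl k :=
        fun k => congrFun (congrArg GraphHom.fN h1) k
      have h1E : ∀ e, δ'.fE (d'.fE e) = Sum.inl e :=
        fun e => congrFun (congrArg GraphHom.fE h1) e
      have hNeq : ∀ x', δ'.fN x' = δN x' := by
        intro x'
        cases h : l₁'.fN x' with
        | inl a =>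
          obtain ⟨k, ⟨hk1, hk2⟩, -⟩ := nodeExists x' a h
          have e1 : δ'.fN x' = Sum.inl k := by rw [← hk2]; exact h1N k
          rw [e1, hδN_inl x' a h k hk1 hk2]
        | inr b =>
          have hA := h2N x'
          rw [h] at hA
          have e2 := hδN_inr x' b h
          cases hy : δ'.fN x' with
          | inl a' => rw [hy] at hA; simp at hA
          | inr b' =>
            rw [hy] at hA
            simp at hA
            rw [e2, hA]
      ext x
      · exact hNeq x
      · show δ'.fE x = δE x
        cases h : l₁'.fE x with
        | inl a =>
          obtain ⟨k, ⟨hk1, hk2⟩, -⟩ := edgeExists x a h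
          have e1 : δ'.fE x = Sum.inl k := by rw [← hk2]; exact h1E k
          rw [e1, hδE_inl x a h k hk1 hk2]
        | inr w =>
          apply pbE_ext (δ'.fE x) (δE x) w
          · rw [h2E x, h]
          · rw [hδE1 x, h]
          · rw [δ'.hsrc x, hδE2 x, hNeq]
          · rw [δ'.htgt x, hδE3 x, hNeq]
end

section
/- Let l : 𝐊 → 𝐋 be a morphism and m : 𝐋 → 𝐆 a matching of polarized graphs (a monomorphism strictly reflecting polarizations). Then in any pullback complement of (m, l) in the category of polarized graphs, the induced morphism d : 𝐊 → 𝐃 is itself a matching of polarized graphs. -/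
universe u

/-- A polarization of a graph: distinguished node subsets `N⁺`, `N⁻` and a
distinguished edge subset `E⋆` such that every edge in `E⋆` has its source
in `N⁺` and its target in `N⁻`. -/
structure Polarization (X : MGraph.{u}) where
  Np : Set X.N
  Nm : Set X.N
  Es : Set X.E
  hs : ∀ e ∈ Es, X.src e ∈ Np
  ht : ∀ e ∈ Es, X.tgt e ∈ Nm

/-- A polarized graph: a graph together with a polarization. -/
structure PGraph : Type (u + 1) where
  toGraph : MGraph.{u}
  pol : Polarization toGraph

/-- A morphism of polarized graphs: a graph morphism preserving the three
distinguished subsets. -/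
structure PGraphHom (X Y : PGraph.{u}) where
  toHom : GraphHom X.toGraph Y.toGraph
  hNp : ∀ n ∈ X.pol.Np, toHom.fN n ∈ Y.pol.Np
  hNm : ∀ n ∈ X.pol.Nm, toHom.fN n ∈ Y.pol.Nm
  hEs : ∀ e ∈ X.pol.Es, toHom.fE e ∈ Y.pol.Es

def PGraphHom.id (X : PGraph.{u}) : PGraphHom X X :=
  ⟨GraphHom.id X.toGraph, fun _ h => h, fun _ h => h, fun _ h => h⟩

/-- `g.comp f` is the composite `g ∘ f`. -/
def PGraphHom.comp {X Y Z : PGraph.{u}} (g : PGraphHom Y Z) (f : PGraphHom X Y) :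
    PGraphHom X Z :=
  ⟨g.toHom.comp f.toHom,
    fun n h => g.hNp _ (f.hNp n h),
    fun n h => g.hNm _ (f.hNm n h),
    fun e h => g.hEs _ (f.hEs e h)⟩

/-- A matching of polarized graphs: a monomorphism (equivalently: both
components injective) which strictly reflects the polarization, i.e.
`f(X^pol) = f(X) ∩ Y^pol`. -/
def Matching {X Y : PGraph.{u}} (f : PGraphHom X Y) : Prop :=
  Function.Injective f.toHom.fN ∧ Function.Injective f.toHom.fE ∧
  (∀ n, f.toHom.fN n ∈ Y.pol.Np ↔ n ∈ X.pol.Np) ∧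
  (∀ n, f.toHom.fN n ∈ Y.pol.Nm ↔ n ∈ X.pol.Nm) ∧
  (∀ e, f.toHom.fE e ∈ Y.pol.Es ↔ e ∈ X.pol.Es)

/-! Auxiliary material. -/

lemma PGraphHom.ext' {X Y : PGraph.{u}} {f g : PGraphHom X Y}
    (hN : f.toHom.fN = g.toHom.fN) (hE : f.toHom.fE = g.toHom.fE) : f = g := by
  cases f; cases g; congr 1; exact GraphHom.ext hN hE

/-- The one-point graph. -/
def ptG : MGraph.{u} := ⟨PUnit, PEmpty, fun e => e.elim, fun e => e.elim⟩

def ptGHom (X : MGraph.{u}) (x : X.N) : GraphHom ptG X :=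
  ⟨fun _ => x, fun e => e.elim, fun e => e.elim, fun e => e.elim⟩

/-- One-point polarized graph with prescribed node polarizations, no edges. -/
def ptPG (S T : Set PUnit.{u+1}) : PGraph.{u} :=
  ⟨ptG, ⟨S, T, ∅, fun e h => absurd h (Set.notMem_empty e),
    fun e h => absurd h (Set.notMem_empty e)⟩⟩

def ptPHom {S T : Set PUnit.{u+1}} (X : PGraph.{u}) (x : X.toGraph.N)
    (hS : ∀ u ∈ S, x ∈ X.pol.Np) (hT : ∀ u ∈ T, x ∈ X.pol.Nm) :
    PGraphHom (ptPG S T) X :=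
  ⟨ptGHom X.toGraph x, fun u h => hS u h, fun u h => hT u h,
    fun e h => absurd h (Set.notMem_empty e)⟩

/-- The one-edge graph. -/
def edG : MGraph.{u} := ⟨ULift Bool, PUnit, fun _ => ⟨true⟩, fun _ => ⟨false⟩⟩

def edGHom (X : MGraph.{u}) (e : X.E) : GraphHom edG X :=
  ⟨fun b => cond b.down (X.src e) (X.tgt e), fun _ => e, fun _ => rfl, fun _ => rfl⟩

/-- One-edge polarized graph, entirely unpolarized. -/
def edPG : PGraph.{u} :=
  ⟨edG, ⟨∅, ∅, ∅, fun e h => absurd h (Set.notMem_empty e),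
    fun e h => absurd h (Set.notMem_empty e)⟩⟩

def edPHom (X : PGraph.{u}) (e : X.toGraph.E) : PGraphHom edPG X :=
  ⟨edGHom X.toGraph e, fun u h => absurd h (Set.notMem_empty u),
    fun u h => absurd h (Set.notMem_empty u),
    fun u h => absurd h (Set.notMem_empty u)⟩

/-- One-edge polarized graph, fully polarized. -/
def edPGp : PGraph.{u} :=
  ⟨edG, ⟨{⟨true⟩}, {⟨false⟩}, Set.univ, fun _ _ => rfl, fun _ _ => rfl⟩⟩

def edPHomP (X : PGraph.{u}) (e : X.toGraph.E) (he : e ∈ X.pol.Es) :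
    PGraphHom edPGp X :=
  ⟨edGHom X.toGraph e,
    by rintro b rfl; exact X.pol.hs e he,
    by rintro b rfl; exact X.pol.ht e he,
    fun _ _ => he⟩

lemma pg_fN_eq {X Y : PGraph.{u}} {f g : PGraphHom X Y} (h : f = g) :
    f.toHom.fN = g.toHom.fN := by rw [h]

lemma pg_fE_eq {X Y : PGraph.{u}} {f g : PGraphHom X Y} (h : f = g) :
    f.toHom.fE = g.toHom.fE := by rw [h]

/-!
STATEMENT 14: if `m : L → G` is a matching of polarized graphs and
`(l₁ : D → G, d : K → D)` is a pullback complement of `(m, l)` in the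
category of polarized graphs (i.e. `(l, d)` is the pullback of `(m, l₁)`),
then `d` is itself a matching of polarized graphs.
-/
theorem pullback_complement_matching {K L G D : PGraph.{u}}
    (l : PGraphHom K L) (m : PGraphHom L G) (hm : Matching m)
    (d : PGraphHom K D) (l₁ : PGraphHom D G)
    (hcomm : m.comp l = l₁.comp d)
    (hpb : ∀ (K' : PGraph.{u}) (l' : PGraphHom K' L) (d' : PGraphHom K' D),
      m.comp l' = l₁.comp d' →
      ∃! κ : PGraphHom K' K, l.comp κ = l' ∧ d.comp κ = d') :
    Matching d := by
  obtain ⟨hmN, hmE, hmNp, hmNm, hmEs⟩ := hm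
  have hcN : ∀ k, m.toHom.fN (l.toHom.fN k) = l₁.toHom.fN (d.toHom.fN k) :=
    fun k => congrFun (pg_fN_eq hcomm) k
  have hcE : ∀ k, m.toHom.fE (l.toHom.fE k) = l₁.toHom.fE (d.toHom.fE k) :=
    fun k => congrFun (pg_fE_eq hcomm) k
  -- the commuting square at a node of K, as point graphs
  have ptSq : ∀ (S T : Set PUnit.{u+1}) (k : K.toGraph.N)
      (hS : ∀ u ∈ S, l.toHom.fN k ∈ L.pol.Np) (hT : ∀ u ∈ T, l.toHom.fN k ∈ L.pol.Nm)
      (hS' : ∀ u ∈ S, d.toHom.fN k ∈ D.pol.Np) (hT' : ∀ u ∈ T, d.toHom.fN k ∈ D.pol.Nm),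
      m.comp (ptPHom L (l.toHom.fN k) hS hT)
        = l₁.comp (ptPHom D (d.toHom.fN k) hS' hT') := by
    intro S T k hS hT hS' hT'
    refine PGraphHom.ext' ?_ ?_
    · funext u; exact hcN k
    · funext e; exact e.elim
  -- mediating maps into K from point graphs are determined by where the point goes
  have ptUniq : ∀ (k₁ k₂ : K.toGraph.N),
      l.toHom.fN k₁ = l.toHom.fN k₂ → d.toHom.fN k₁ = d.toHom.fN k₂ → k₁ = k₂ := by
    intro k₁ k₂ hL hD
    obtain ⟨κ, _, huniq⟩ := hpb (ptPG ∅ ∅)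
      (ptPHom L (l.toHom.fN k₁) (fun u h => absurd h (Set.notMem_empty u))
        (fun u h => absurd h (Set.notMem_empty u)))
      (ptPHom D (d.toHom.fN k₁) (fun u h => absurd h (Set.notMem_empty u))
        (fun u h => absurd h (Set.notMem_empty u)))
      (ptSq ∅ ∅ k₁ _ _ _ _)
    have mk : ∀ (k : K.toGraph.N), l.toHom.fN k = l.toHom.fN k₁ →
        d.toHom.fN k = d.toHom.fN k₁ →
        κ = ptPHom K k (fun u h => absurd h (Set.notMem_empty u))
          (fun u h => absurd h (Set.notMem_empty u)) := by
      intro k h1 h2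
      refine (huniq _ ⟨?_, ?_⟩).symm
      · exact PGraphHom.ext' (funext fun _ => h1) (funext fun e => e.elim)
      · exact PGraphHom.ext' (funext fun _ => h2) (funext fun e => e.elim)
    have h1 := mk k₁ rfl rfl
    have h2 := mk k₂ hL.symm hD.symm
    have := congrFun (pg_fN_eq (h1.symm.trans h2)) PUnit.unit
    exact this
  -- the commuting square at an edge of K, unpolarized version
  have edSq : ∀ (k : K.toGraph.E),
      m.comp (edPHom L (l.toHom.fE k)) = l₁.comp (edPHom D (d.toHom.fE k)) := by
    intro k
    refine PGraphHom.ext' ?_ (funext fun _ => hcE k)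
    funext b; obtain ⟨b⟩ := b; cases b
    · show m.toHom.fN (L.toGraph.tgt (l.toHom.fE k))
        = l₁.toHom.fN (D.toGraph.tgt (d.toHom.fE k))
      rw [l.toHom.htgt, d.toHom.htgt, hcN]
    · show m.toHom.fN (L.toGraph.src (l.toHom.fE k))
        = l₁.toHom.fN (D.toGraph.src (d.toHom.fE k))
      rw [l.toHom.hsrc, d.toHom.hsrc, hcN]
  -- mediating maps into K from the unpolarized edge graph
  have edUniq : ∀ (k₁ k₂ : K.toGraph.E),
      l.toHom.fE k₁ = l.toHom.fE k₂ → d.toHom.fE k₁ = d.toHom.fE k₂ → k₁ = k₂ := by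
    intro k₁ k₂ hL hD
    obtain ⟨κ, _, huniq⟩ := hpb edPG (edPHom L (l.toHom.fE k₁))
      (edPHom D (d.toHom.fE k₁)) (edSq k₁)
    have mk : ∀ (k : K.toGraph.E), l.toHom.fE k = l.toHom.fE k₁ →
        d.toHom.fE k = d.toHom.fE k₁ → κ = edPHom K k := by
      intro k h1 h2
      refine (huniq _ ⟨?_, ?_⟩).symm
      · refine PGraphHom.ext' ?_ (funext fun _ => h1)
        funext b; obtain ⟨b⟩ := b; cases b
        · show l.toHom.fN (K.toGraph.tgt k) = L.toGraph.tgt (l.toHom.fE k₁)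
          rw [← h1, l.toHom.htgt]
        · show l.toHom.fN (K.toGraph.src k) = L.toGraph.src (l.toHom.fE k₁)
          rw [← h1, l.toHom.hsrc]
      · refine PGraphHom.ext' ?_ (funext fun _ => h2)
        funext b; obtain ⟨b⟩ := b; cases b
        · show d.toHom.fN (K.toGraph.tgt k) = D.toGraph.tgt (d.toHom.fE k₁)
          rw [← h2, d.toHom.htgt]
        · show d.toHom.fN (K.toGraph.src k) = D.toGraph.src (d.toHom.fE k₁)
          rw [← h2, d.toHom.hsrc]
    have h1 := mk k₁ rfl rfl
    have h2 := mk k₂ hL.symm hD.symm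
    exact congrFun (pg_fE_eq (h1.symm.trans h2)) PUnit.unit
  refine ⟨?_, ?_, ?_, ?_, ?_⟩
  · -- node injectivity
    intro k₁ k₂ hD
    have hL : l.toHom.fN k₁ = l.toHom.fN k₂ := hmN (by rw [hcN, hcN, hD])
    exact ptUniq k₁ k₂ hL hD
  · -- edge injectivity
    intro k₁ k₂ hD
    have hL : l.toHom.fE k₁ = l.toHom.fE k₂ := hmE (by rw [hcE, hcE, hD])
    exact edUniq k₁ k₂ hL hD
  · -- Np reflection
    intro n
    refine ⟨fun h => ?_, fun h => d.hNp n h⟩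
    have hLn : l.toHom.fN n ∈ L.pol.Np := (hmNp _).mp (by rw [hcN]; exact l₁.hNp _ h)
    obtain ⟨κ, ⟨hκl, hκd⟩, _⟩ := hpb (ptPG Set.univ ∅)
      (ptPHom L (l.toHom.fN n) (fun _ _ => hLn)
        (fun u h => absurd h (Set.notMem_empty u)))
      (ptPHom D (d.toHom.fN n) (fun _ _ => h)
        (fun u h => absurd h (Set.notMem_empty u)))
      (ptSq _ _ n _ _ _ _)
    have hmem : κ.toHom.fN PUnit.unit ∈ K.pol.Np := κ.hNp PUnit.unit trivial
    have : κ.toHom.fN PUnit.unit = n := by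
      refine ptUniq _ _ ?_ ?_
      · exact congrFun (pg_fN_eq hκl) PUnit.unit
      · exact congrFun (pg_fN_eq hκd) PUnit.unit
    rwa [this] at hmem
  · -- Nm reflection
    intro n
    refine ⟨fun h => ?_, fun h => d.hNm n h⟩
    have hLn : l.toHom.fN n ∈ L.pol.Nm := (hmNm _).mp (by rw [hcN]; exact l₁.hNm _ h)
    obtain ⟨κ, ⟨hκl, hκd⟩, _⟩ := hpb (ptPG ∅ Set.univ)
      (ptPHom L (l.toHom.fN n) (fun u h => absurd h (Set.notMem_empty u))
        (fun _ _ => hLn))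
      (ptPHom D (d.toHom.fN n) (fun u h => absurd h (Set.notMem_empty u))
        (fun _ _ => h))
      (ptSq _ _ n _ _ _ _)
    have hmem : κ.toHom.fN PUnit.unit ∈ K.pol.Nm := κ.hNm PUnit.unit trivial
    have : κ.toHom.fN PUnit.unit = n := by
      refine ptUniq _ _ ?_ ?_
      · exact congrFun (pg_fN_eq hκl) PUnit.unit
      · exact congrFun (pg_fN_eq hκd) PUnit.unit
    rwa [this] at hmem
  · -- Es reflection
    intro e
    refine ⟨fun h => ?_, fun h => d.hEs e h⟩
    have hLe : l.toHom.fE e ∈ L.pol.Es := (hmEs _).mp (by rw [hcE]; exact l₁.hEs _ h)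
    -- fully polarized edge graph square
    have sq : m.comp (edPHomP L (l.toHom.fE e) hLe)
        = l₁.comp (edPHomP D (d.toHom.fE e) h) := by
      refine PGraphHom.ext' ?_ (funext fun _ => hcE e)
      funext b; obtain ⟨b⟩ := b; cases b
      · show m.toHom.fN (L.toGraph.tgt (l.toHom.fE e))
          = l₁.toHom.fN (D.toGraph.tgt (d.toHom.fE e))
        rw [l.toHom.htgt, d.toHom.htgt, hcN]
      · show m.toHom.fN (L.toGraph.src (l.toHom.fE e))
          = l₁.toHom.fN (D.toGraph.src (d.toHom.fE e))
        rw [l.toHom.hsrc, d.toHom.hsrc, hcN]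
    obtain ⟨κ, ⟨hκl, hκd⟩, _⟩ := hpb edPGp (edPHomP L (l.toHom.fE e) hLe)
      (edPHomP D (d.toHom.fE e) h) sq
    have hmem : κ.toHom.fE PUnit.unit ∈ K.pol.Es := κ.hEs PUnit.unit trivial
    have : κ.toHom.fE PUnit.unit = e := by
      refine edUniq _ _ ?_ ?_
      · exact congrFun (pg_fE_eq hκl) PUnit.unit
      · exact congrFun (pg_fE_eq hκd) PUnit.unit
    rwa [this] at hmem
end
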